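/- arXiv:1401.2419 — 2 statements merged into one kernel-verified Lean document; each statement's English description precedes it below -/
import Mathlib

section
/- Let d ≥ 2 be an integer and ω = e^{2πi/(d+1)}. Define the sequence L by L(1) = 1, L(2j) = ω^{−j}, L(2j+1) = ω^{j}, and the sequence L′ by L′(1) = 1, L′(2j) = ω^{j}, L′(2j+1) = ω^{−j}. For integers 0 ≤ k ≤ n let e_{k,n} and e′_{k,n} be the k-th elementary symmetric polynomial evaluated respectively at (L(1), …, L(n)) and (L′(1), …, L′(n)). Then for all 0 ≤ k ≤ n: (i) if n is odd then e_{k,n} = e′_{k,n} and e_{n−k,n} = e_{k,n}; (ii) if n is even then e_{k,n} = ω^{−n/2}·e′_{n−k,n} and e′_{k,n} = ω^{n/2}·e_{n−k,n}. -/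
/-- `ω = e^{2πi/(d+1)}`. -/
noncomputable def omC (d : ℕ) : ℂ := Complex.exp (2 * Real.pi * Complex.I / ((d : ℂ) + 1))

/-- The sequence `L(1) = 1`, `L(2j) = ω^{-j}`, `L(2j+1) = ω^j` (1-based argument). -/
noncomputable def Lseq (d : ℕ) (m : ℕ) : ℂ :=
  if m % 2 = 0 then (omC d ^ (m / 2))⁻¹ else omC d ^ (m / 2)

/-- The sequence `L'(1) = 1`, `L'(2j) = ω^{j}`, `L'(2j+1) = ω^{-j}`. -/
noncomputable def Lseq' (d : ℕ) (m : ℕ) : ℂ :=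
  if m % 2 = 0 then omC d ^ (m / 2) else (omC d ^ (m / 2))⁻¹

/-- `k`-th elementary symmetric polynomial evaluated at the first `n` terms of `f`. -/
noncomputable def esymSeq (f : ℕ → ℂ) (n k : ℕ) : ℂ :=
  ∑ A ∈ Finset.powersetCard k (Finset.Icc 1 n), ∏ i ∈ A, f i

lemma omC_ne_zero (d : ℕ) : omC d ≠ 0 := Complex.exp_ne_zero _

lemma Lseq_ne_zero (d m : ℕ) : Lseq d m ≠ 0 := by
  unfold Lseq
  have := omC_ne_zero d
  split <;> simp [pow_ne_zero, this]

lemma Lseq'_eq_inv (d m : ℕ) : Lseq' d m = (Lseq d m)⁻¹ := by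
  unfold Lseq Lseq'
  split <;> simp

/-- Reflection: `e_{n-k}(f) = (∏ f) * e_k(f⁻¹)`. -/
lemma esym_reflect (f : ℕ → ℂ) (n k : ℕ) (hk : k ≤ n)
    (hf : ∀ i ∈ Finset.Icc 1 n, f i ≠ 0) :
    esymSeq f n (n - k) =
      (∏ i ∈ Finset.Icc 1 n, f i) * esymSeq (fun i => (f i)⁻¹) n k := by
  classical
  unfold esymSeq
  rw [Finset.mul_sum]
  have hcard : (Finset.Icc 1 n).card = n := by simp
  refine Finset.sum_nbij' (fun A => Finset.Icc 1 n \ A) (fun A => Finset.Icc 1 n \ A)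
    ?_ ?_ ?_ ?_ ?_
  · intro A hA
    rw [Finset.mem_powersetCard] at hA ⊢
    refine ⟨Finset.sdiff_subset, ?_⟩
    rw [Finset.card_sdiff_of_subset hA.1, hcard, hA.2]
    omega
  · intro A hA
    rw [Finset.mem_powersetCard] at hA ⊢
    refine ⟨Finset.sdiff_subset, ?_⟩
    rw [Finset.card_sdiff_of_subset hA.1, hcard, hA.2]
  · intro A hA
    rw [Finset.mem_powersetCard] at hA
    exact Finset.sdiff_sdiff_eq_self hA.1
  · intro A hA
    rw [Finset.mem_powersetCard] at hA
    exact Finset.sdiff_sdiff_eq_self hA.1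
  · intro A hA
    rw [Finset.mem_powersetCard] at hA
    have hsplit : (∏ i ∈ Finset.Icc 1 n \ A, f i) * ∏ i ∈ A, f i
        = ∏ i ∈ Finset.Icc 1 n, f i := Finset.prod_sdiff hA.1
    have h1 : ∏ i ∈ Finset.Icc 1 n \ A, (fun i => (f i)⁻¹) i
        = (∏ i ∈ Finset.Icc 1 n \ A, f i)⁻¹ := by
      simp [Finset.prod_inv_distrib]
    have hne : ∏ i ∈ Finset.Icc 1 n \ A, f i ≠ 0 := by
      refine Finset.prod_ne_zero_iff.2 fun i hi => hf i (Finset.mem_sdiff.1 hi).1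
    rw [h1, ← hsplit, mul_comm (∏ i ∈ Finset.Icc 1 n \ A, f i) (∏ i ∈ A, f i),
      mul_assoc, mul_inv_cancel₀ hne, mul_one]

/-- Permutation invariance of `esymSeq`. -/
lemma esym_perm (σ : ℕ → ℕ) (hσσ : ∀ m, σ (σ m) = m) (n : ℕ)
    (hmap : ∀ i ∈ Finset.Icc 1 n, σ i ∈ Finset.Icc 1 n)
    (f g : ℕ → ℂ) (hfg : ∀ i ∈ Finset.Icc 1 n, f (σ i) = g i) (k : ℕ) :
    esymSeq f n k = esymSeq g n k := by
  classical
  have hinj : Function.Injective σ := Function.LeftInverse.injective hσσ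
  unfold esymSeq
  refine (Finset.sum_nbij' (fun A : Finset ℕ => A.image σ) (fun A : Finset ℕ => A.image σ) ?_ ?_ ?_ ?_ ?_).symm
  · intro A hA
    rw [Finset.mem_powersetCard] at hA ⊢
    constructor
    · intro x hx
      obtain ⟨y, hy, rfl⟩ := Finset.mem_image.1 hx
      exact hmap y (hA.1 hy)
    · rw [Finset.card_image_of_injective _ hinj, hA.2]
  · intro A hA
    rw [Finset.mem_powersetCard] at hA ⊢
    constructor
    · intro x hx
      obtain ⟨y, hy, rfl⟩ := Finset.mem_image.1 hx
      exact hmap y (hA.1 hy)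
    · rw [Finset.card_image_of_injective _ hinj, hA.2]
  · intro A hA
    show (A.image σ).image σ = A
    rw [Finset.image_image]
    have : σ ∘ σ = id := funext hσσ
    rw [this, Finset.image_id]
  · intro A hA
    show (A.image σ).image σ = A
    rw [Finset.image_image]
    have : σ ∘ σ = id := funext hσσ
    rw [this, Finset.image_id]
  · intro A hA
    rw [Finset.mem_powersetCard] at hA
    rw [Finset.prod_image (fun x _ y _ h => hinj h)]
    exact Finset.prod_congr rfl fun i hi => (hfg i (hA.1 hi)).symm

lemma prod_Lseq (d n : ℕ) :
    ∏ i ∈ Finset.Icc 1 n, Lseq d i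
      = if n % 2 = 0 then (omC d ^ (n / 2))⁻¹ else 1 := by
  induction n with
  | zero => simp
  | succ n ih =>
    have hnot : n + 1 ∉ Finset.Icc 1 n := by simp
    have hIcc : Finset.Icc 1 (n + 1) = insert (n + 1) (Finset.Icc 1 n) := by
      ext x; simp [Finset.mem_Icc, Finset.mem_insert]; omega
    rw [hIcc, Finset.prod_insert hnot, ih]
    unfold Lseq
    rcases Nat.mod_two_eq_zero_or_one n with h1 | h1
    · have h2 : (n + 1) % 2 = 1 := by omega
      have h3 : (n + 1) / 2 = n / 2 := by omega
      simp [h1, h2, h3]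
      exact mul_inv_cancel₀ (pow_ne_zero _ (omC_ne_zero d))
    · have h2 : (n + 1) % 2 = 0 := by omega
      simp [h1, h2]

lemma prod_Lseq' (d n : ℕ) :
    ∏ i ∈ Finset.Icc 1 n, Lseq' d i
      = if n % 2 = 0 then omC d ^ (n / 2) else 1 := by
  have : ∏ i ∈ Finset.Icc 1 n, Lseq' d i = (∏ i ∈ Finset.Icc 1 n, Lseq d i)⁻¹ := by
    rw [← Finset.prod_inv_distrib]
    exact Finset.prod_congr rfl fun i _ => Lseq'_eq_inv d i
  rw [this, prod_Lseq]
  split <;> simp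

/-- Symmetric-function identities for `e_{k,n}` and `e'_{k,n}`:
(i) if `n` is odd then `e_{k,n} = e'_{k,n}` and `e_{n-k,n} = e_{k,n}`;
(ii) if `n` is even then `e_{k,n} = ω^{-n/2}·e'_{n-k,n}` and `e'_{k,n} = ω^{n/2}·e_{n-k,n}`. -/
theorem stmt13 (d : ℕ) (hd : 2 ≤ d) (n k : ℕ) (hk : k ≤ n) :
    (n % 2 = 1 →
      esymSeq (Lseq d) n k = esymSeq (Lseq' d) n k ∧
      esymSeq (Lseq d) n (n - k) = esymSeq (Lseq d) n k) ∧
    (n % 2 = 0 →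
      esymSeq (Lseq d) n k = (omC d ^ (n / 2))⁻¹ * esymSeq (Lseq' d) n (n - k) ∧
      esymSeq (Lseq' d) n k = omC d ^ (n / 2) * esymSeq (Lseq d) n (n - k)) := by
  have hLne : ∀ i ∈ Finset.Icc 1 n, Lseq d i ≠ 0 := fun i _ => Lseq_ne_zero d i
  have hL'ne : ∀ i ∈ Finset.Icc 1 n, Lseq' d i ≠ 0 := fun i _ => by
    rw [Lseq'_eq_inv]; exact inv_ne_zero (Lseq_ne_zero d i)
  have hLinv : (fun i => (Lseq d i)⁻¹) = Lseq' d := by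
    funext i; exact (Lseq'_eq_inv d i).symm
  have hL'inv : (fun i => (Lseq' d i)⁻¹) = Lseq d := by
    funext i; rw [Lseq'_eq_inv, inv_inv]
  -- reflection identities
  have refl1 : ∀ j ≤ n, esymSeq (Lseq d) n (n - j)
      = (∏ i ∈ Finset.Icc 1 n, Lseq d i) * esymSeq (Lseq' d) n j := by
    intro j hj
    rw [esym_reflect (Lseq d) n j hj hLne, hLinv]
  have refl2 : ∀ j ≤ n, esymSeq (Lseq' d) n (n - j)
      = (∏ i ∈ Finset.Icc 1 n, Lseq' d i) * esymSeq (Lseq d) n j := by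
    intro j hj
    rw [esym_reflect (Lseq' d) n j hj hL'ne, hL'inv]
  constructor
  · intro hodd
    have hP : ∏ i ∈ Finset.Icc 1 n, Lseq d i = 1 := by rw [prod_Lseq]; simp [hodd]
    -- permutation
    set σ : ℕ → ℕ := fun m => if m ≤ 1 then m else if m % 2 = 0 then m + 1 else m - 1
      with hσdef
    have hσσ : ∀ m, σ (σ m) = m := by
      intro m
      by_cases h1 : m ≤ 1
      · simp [hσdef, h1]
      · by_cases h2 : m % 2 = 0
        · have h3 : ¬ (m + 1 ≤ 1) := by omega
          have h4 : ¬ ((m + 1) % 2 = 0) := by omega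
          simp [hσdef, h1, h2, h3, h4]
        · have h3 : ¬ (m - 1 ≤ 1) := by omega
          have h4 : (m - 1) % 2 = 0 := by omega
          simp only [hσdef, h1, h2, h3, h4, if_false, if_true]
          omega
    have hmap : ∀ i ∈ Finset.Icc 1 n, σ i ∈ Finset.Icc 1 n := by
      intro i hi
      rw [Finset.mem_Icc] at hi ⊢
      simp only [hσdef]
      split
      · omega
      · split <;> omega
    have hfg : ∀ i ∈ Finset.Icc 1 n, Lseq d (σ i) = Lseq' d i := by
      intro i hi
      rw [Finset.mem_Icc] at hi
      by_cases h : i ≤ 1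
      · have h1 : i = 1 := by omega
        subst h1
        simp [hσdef, Lseq, Lseq']
      · by_cases h2 : i % 2 = 0
        · have h4 : ¬ ((i + 1) % 2 = 0) := by omega
          have h5 : (i + 1) / 2 = i / 2 := by omega
          simp [hσdef, Lseq, Lseq', h, h2, h4, h5]
        · have h3 : (i - 1) % 2 = 0 := by omega
          have h5 : (i - 1) / 2 = i / 2 := by omega
          simp [hσdef, Lseq, Lseq', h, h2, h3, h5]
    have hperm : ∀ j, esymSeq (Lseq d) n j = esymSeq (Lseq' d) n j :=
      fun j => esym_perm σ hσσ n hmap (Lseq d) (Lseq' d) hfg j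
    refine ⟨hperm k, ?_⟩
    rw [refl1 k hk, hP, one_mul, hperm k]
  · intro heven
    have hP : ∏ i ∈ Finset.Icc 1 n, Lseq d i = (omC d ^ (n / 2))⁻¹ := by
      rw [prod_Lseq]; simp [heven]
    have hP' : ∏ i ∈ Finset.Icc 1 n, Lseq' d i = omC d ^ (n / 2) := by
      rw [prod_Lseq']; simp [heven]
    have hk2 : n - (n - k) = k := by omega
    constructor
    · have := refl1 (n - k) (Nat.sub_le n k)
      rw [hk2, hP] at this
      exact this
    · have := refl2 (n - k) (Nat.sub_le n k)
      rw [hk2, hP'] at this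
      exact this
end

section
/- Let d ≥ 2 be an even integer and ω = e^{2πi/(d+1)}. With e_{k,n} and e′_{k,n} the k-th elementary symmetric polynomials evaluated at the first n terms of the sequences L(1) = 1, L(2j) = ω^{−j}, L(2j+1) = ω^{j} and L′(1) = 1, L′(2j) = ω^{j}, L′(2j+1) = ω^{−j} respectively, it holds that e′_{d+1−k,d} = −e_{k,d} for every k with 1 ≤ k ≤ d. -/
lemma esymSeq_eq_esymm (f : ℕ → ℂ) (n k : ℕ) :
    esymSeq f n k = ((Finset.Icc 1 n).val.map f).esymm k := by
  rw [Finset.esymm_map_val]; rfl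

lemma esymm_cons (a : ℂ) (s : Multiset ℂ) (k : ℕ) :
    (a ::ₘ s).esymm (k + 1) = s.esymm (k + 1) + a * s.esymm k := by
  simp only [Multiset.esymm, Multiset.powersetCard_cons, Multiset.map_add, Multiset.sum_add,
    Multiset.map_map, Function.comp_def, Multiset.prod_cons, Multiset.sum_map_mul_left]

lemma esymm_scale (c : ℂ) (k : ℕ) (s : Multiset ℂ) :
    (s.map (c * ·)).esymm k = c ^ k * s.esymm k := by
  have := Multiset.pow_smul_esymm c k s
  simpa [smul_eq_mul] using this.symm

lemma esymm_roots_zero {n : ℕ} (ζ : ℂ) (hζ : IsPrimitiveRoot ζ n) {k : ℕ}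
    (hk1 : 1 ≤ k) (hkn : k < n) :
    ((Multiset.range n).map (ζ ^ ·)).esymm k = 0 := by
  set M : Multiset ℂ := (Multiset.range n).map (ζ ^ ·) with hM
  have hperm : (Multiset.range n).map (fun j => (j + 1) % n) = Multiset.range n := by
    have hinj : Set.InjOn (fun j => (j + 1) % n) (Finset.range n) := by
      intro x hx y hy h
      simp only [Finset.coe_range, Set.mem_Iio] at hx hy
      change (x + 1) % n = (y + 1) % n at h
      rcases Nat.lt_or_ge (x + 1) n with h1 | h1 <;> rcases Nat.lt_or_ge (y + 1) n with h2 | h2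
      · rw [Nat.mod_eq_of_lt h1, Nat.mod_eq_of_lt h2] at h; omega
      · have hy2 : y + 1 = n := by omega
        rw [Nat.mod_eq_of_lt h1, hy2, Nat.mod_self] at h; omega
      · have hx2 : x + 1 = n := by omega
        rw [Nat.mod_eq_of_lt h2, hx2, Nat.mod_self] at h; omega
      · omega
    have hsub : Finset.image (fun j => (j + 1) % n) (Finset.range n) ⊆ Finset.range n := by
      intro x hx
      simp only [Finset.mem_image, Finset.mem_range] at hx ⊢
      obtain ⟨m, hm, rfl⟩ := hx
      exact Nat.mod_lt _ (by omega)
    have hcard : (Finset.range n).card ≤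
        (Finset.image (fun j => (j + 1) % n) (Finset.range n)).card := by
      rw [Finset.card_image_of_injOn hinj]
    have himg := Finset.eq_of_subset_of_card_le hsub hcard
    calc (Multiset.range n).map (fun j => (j + 1) % n)
        = (Finset.range n).val.map (fun j => (j + 1) % n) := by rw [Finset.range_val]
      _ = (Finset.image (fun j => (j + 1) % n) (Finset.range n)).val := by
          rw [Finset.image_val_of_injOn hinj]
      _ = Multiset.range n := by rw [himg, Finset.range_val]
  have hfix : M.map (ζ * ·) = M := by
    rw [hM, Multiset.map_map]
    have h1 : (Multiset.range n).map ((ζ * ·) ∘ (ζ ^ ·)) =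
        (Multiset.range n).map (fun j => ζ ^ ((j + 1) % n)) := by
      apply Multiset.map_congr rfl
      intro j hj
      rw [Multiset.mem_range] at hj
      simp only [Function.comp_apply, ← pow_succ']
      rcases eq_or_lt_of_le (Nat.succ_le_of_lt hj) with h | h
      · have h' : j + 1 = n := h
        rw [h', Nat.mod_self, pow_zero, hζ.pow_eq_one]
      · rw [Nat.mod_eq_of_lt h]
    rw [h1]
    have h2 : (Multiset.range n).map (fun j => ζ ^ ((j + 1) % n)) =
        ((Multiset.range n).map (fun j => (j + 1) % n)).map (ζ ^ ·) := by
      rw [Multiset.map_map]; rfl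
    rw [h2, hperm]
  have hscale := esymm_scale ζ k M
  rw [hfix] at hscale
  have hne : ζ ^ k ≠ 1 := hζ.pow_ne_one_of_pos_of_lt (by omega) hkn
  have : (ζ ^ k - 1) * M.esymm k = 0 := by linear_combination -hscale
  rcases mul_eq_zero.mp this with h | h
  · exact absurd (by linear_combination h) hne
  · exact h

lemma key (d : ℕ) (hd : 2 ≤ d) (hdeven : d % 2 = 0) (ζ : ℂ) (hζ : IsPrimitiveRoot ζ (d + 1)) :
    ∀ k ≤ d, ((Finset.Icc 1 d).val.map
      (fun m => if m % 2 = 0 then (ζ ^ (m / 2))⁻¹ else ζ ^ (m / 2))).esymm k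
      = (-(ζ ^ (d / 2))) ^ k := by
  set f : ℕ → ℂ := fun m => if m % 2 = 0 then (ζ ^ (m / 2))⁻¹ else ζ ^ (m / 2) with hf
  set e : ℕ → ℕ := fun m => if m % 2 = 0 then d + 1 - m / 2 else m / 2 with he
  have hfe : ∀ m ∈ Finset.Icc 1 d, f m = ζ ^ e m := by
    intro m hm
    rw [Finset.mem_Icc] at hm
    simp only [hf, he]
    split
    · apply inv_eq_of_mul_eq_one_right
      rw [← pow_add]
      have : m / 2 + (d + 1 - m / 2) = d + 1 := by omega
      rw [this, hζ.pow_eq_one]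
    · rfl
  have hinj : Set.InjOn e (Finset.Icc 1 d) := by
    intro x hx y hy h
    simp only [Finset.coe_Icc, Set.mem_Icc] at hx hy
    simp only [he] at h
    split_ifs at h <;> omega
  have himg : Finset.image e (Finset.Icc 1 d) = (Finset.range (d + 1)).erase (d / 2) := by
    apply Finset.eq_of_subset_of_card_le
    · intro x hx
      simp only [Finset.mem_image, Finset.mem_Icc] at hx
      obtain ⟨m, hm, rfl⟩ := hx
      simp only [Finset.mem_erase, Finset.mem_range, he]
      split <;> omega
    · rw [Finset.card_erase_of_mem (by simp only [Finset.mem_range]; omega),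
        Finset.card_image_of_injOn hinj, Nat.card_Icc, Finset.card_range]
  set s : Multiset ℂ := (Finset.Icc 1 d).val.map f with hs
  have hsval : s = (((Finset.range (d + 1)).erase (d / 2)).val).map (ζ ^ ·) := by
    rw [hs, Multiset.map_congr rfl hfe, ← himg, Finset.image_val_of_injOn hinj,
      Multiset.map_map]
    rfl
  have hcons : ζ ^ (d / 2) ::ₘ s = (Multiset.range (d + 1)).map (ζ ^ ·) := by
    rw [hsval, Finset.erase_val, ← Multiset.map_cons,
      Multiset.cons_erase (by rw [Finset.range_val, Multiset.mem_range]; omega),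
      Finset.range_val]
  have hzero : ∀ k, 1 ≤ k → k ≤ d → (ζ ^ (d / 2) ::ₘ s).esymm k = 0 := by
    intro k hk1 hkd
    rw [hcons]
    exact esymm_roots_zero ζ hζ hk1 (by omega)
  intro k hk
  induction k with
  | zero => simp [Multiset.esymm, Multiset.powersetCard_zero_left]
  | succ k ih =>
    have hk' : k ≤ d := by omega
    have h0 := hzero (k + 1) (by omega) hk
    rw [esymm_cons] at h0
    have : s.esymm (k + 1) = -(ζ ^ (d / 2)) * s.esymm k := by linear_combination h0
    rw [this, ih hk', pow_succ]
    ring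

/-- For `d` even and `1 ≤ k ≤ d`: `e'_{d+1-k,d} = -e_{k,d}`. -/
theorem stmt14 (d : ℕ) (hd : 2 ≤ d) (hdeven : d % 2 = 0) (k : ℕ) (hk1 : 1 ≤ k) (hkd : k ≤ d) :
    esymSeq (Lseq' d) d (d + 1 - k) = -esymSeq (Lseq d) d k := by
  have hω : IsPrimitiveRoot (omC d) (d + 1) := by
    have h := Complex.isPrimitiveRoot_exp (d + 1) (by omega)
    have : ((d + 1 : ℕ) : ℂ) = (d : ℂ) + 1 := by push_cast; ring
    rwa [this] at h
  have hω' : IsPrimitiveRoot (omC d)⁻¹ (d + 1) := hω.inv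
  have hL : Lseq d = fun m => if m % 2 = 0 then (omC d ^ (m / 2))⁻¹ else omC d ^ (m / 2) := rfl
  have hL' : Lseq' d = fun m =>
      if m % 2 = 0 then ((omC d)⁻¹ ^ (m / 2))⁻¹ else (omC d)⁻¹ ^ (m / 2) := by
    funext m
    simp only [Lseq', inv_pow, inv_inv]
  have e1 : esymSeq (Lseq d) d k = (-(omC d ^ (d / 2))) ^ k := by
    rw [esymSeq_eq_esymm, hL]
    exact key d hd hdeven (omC d) hω k hkd
  have e2 : esymSeq (Lseq' d) d (d + 1 - k) = (-((omC d)⁻¹ ^ (d / 2))) ^ (d + 1 - k) := by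
    rw [esymSeq_eq_esymm, hL']
    exact key d hd hdeven (omC d)⁻¹ hω' (d + 1 - k) (by omega)
  rw [e1, e2]
  have ha1 : (omC d ^ (d / 2)) ^ (d + 1) = 1 := by
    rw [← pow_mul, mul_comm, pow_mul, hω.pow_eq_one, one_pow]
  rw [inv_pow]
  generalize omC d ^ (d / 2) = a at ha1 ⊢
  have hodd : Odd (d + 1) := ⟨d / 2, by omega⟩
  have hb1 : (-a) ^ (d + 1) = -1 := by rw [hodd.neg_pow, ha1]
  have hmul : (-a) ^ (d + 1 - k) * (-a) ^ k = -1 := by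
    rw [← pow_add]
    have h : d + 1 - k + k = d + 1 := by omega
    rw [h, hb1]
  rw [neg_inv, inv_pow]
  apply inv_eq_of_mul_eq_one_right
  linear_combination -hmul
end
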